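/- Let (X, d) be a metric space, K ⊆ X a compact set, and (A_n) a sequence of subsets of K. Then for every δ > 0 there exists n₀ ∈ ℕ such that A_n ⊆ N_δ(limsup_n A_n) for all n ≥ n₀, where N_δ(B) = {x ∈ X : dist(x, B) < δ}. -/
import Mathlib


open Filter Topology

/-- Kuratowski limit superior of a sequence of subsets of a metric space. -/
def SeqLimsup {X : Type*} [MetricSpace X] (A : ℕ → Set X) : Set X :=
  {x | ∃ φ : ℕ → ℕ, StrictMono φ ∧
    ∃ y : ℕ → X, (∀ n, y n ∈ A (φ n)) ∧ Tendsto y atTop (𝓝 x)}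

/-- Let `K ⊆ X` be compact and `(A_n)` a sequence of subsets of `K`. Then for
every `δ > 0` there exists `n₀` such that `A_n ⊆ N_δ(limsup_n A_n)` for all
`n ≥ n₀`, where `N_δ(B) = {x : dist(x, B) < δ}`. -/
theorem subsets_eventually_in_nbhd_of_seqLimsup {X : Type*} [MetricSpace X]
    (K : Set X) (hK : IsCompact K)
    (A : ℕ → Set X) (hAsub : ∀ n, A n ⊆ K) :
    ∀ δ : ℝ, 0 < δ → ∃ n₀ : ℕ, ∀ n ≥ n₀,
      A n ⊆ {x : X | Metric.infDist x (SeqLimsup A) < δ} := by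
  intro δ hδ
  by_contra h
  push_neg at h
  have hfreq : ∃ᶠ n in atTop, ∃ x ∈ A n, δ ≤ Metric.infDist x (SeqLimsup A) := by
    rw [frequently_atTop]
    intro n₀
    obtain ⟨n, hn, hns⟩ := h n₀
    obtain ⟨x, hxA, hx⟩ := Set.not_subset.mp hns
    exact ⟨n, hn, x, hxA, not_lt.mp hx⟩
  obtain ⟨φ, hφ, hP⟩ := Filter.extraction_of_frequently_atTop hfreq
  choose u huA hud using hP
  obtain ⟨x, hxK, ψ, hψ, hconv⟩ := hK.tendsto_subseq (fun n => hAsub (φ n) (huA n))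
  have hxL : x ∈ SeqLimsup A :=
    ⟨φ ∘ ψ, hφ.comp hψ, u ∘ ψ, fun n => huA (ψ n), hconv⟩
  have hge : δ ≤ Metric.infDist x (SeqLimsup A) := by
    have : Tendsto (fun n => Metric.infDist ((u ∘ ψ) n) (SeqLimsup A)) atTop
        (𝓝 (Metric.infDist x (SeqLimsup A))) :=
      ((Metric.continuous_infDist_pt _).tendsto x).comp hconv
    exact le_of_tendsto_of_tendsto' tendsto_const_nhds this fun n => hud (ψ n)
  rw [Metric.infDist_zero_of_mem hxL] at hge
  linarith
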